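/- Under the additive model, the additive components are identified up to constants: if μ + Σ_l m_l(x_l) = μ' + Σ_l m_l'(x_l) for almost all x (with respect to a product measure with full support), and E[m_l(X_l)] = E[m_l'(X_l)] = 0 for all l with X having independent coordinates, then μ = μ' and m_l = m_l' almost everywhere for each l. -/

import Mathlib

open MeasureTheory ProbabilityTheory Filter
open scoped BigOperators Topology


lemma measurePreserving_eval' {ι : Type*} [Fintype ι] (ν : ι → Measure ℝ)
    [∀ i, IsProbabilityMeasure (ν i)] (i : ι) :
    MeasurePreserving (Function.eval i) (Measure.pi ν) (ν i) := by
  classical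
  refine ⟨measurable_pi_apply i, ?_⟩
  ext s hs
  rw [Measure.map_apply (measurable_pi_apply i) hs, Set.eval_preimage, Measure.pi_pi]
  rw [Finset.prod_eq_single i (fun j _ hj => by simp [Function.update_of_ne hj]) (by simp)]
  simp

lemma integrable_comp_eval {ι : Type*} [Fintype ι] (ν : ι → Measure ℝ)
    [∀ i, IsProbabilityMeasure (ν i)] (i : ι) {f : ℝ → ℝ} (hf : Integrable f (ν i)) :
    Integrable (fun x : ι → ℝ => f (x i)) (Measure.pi ν) := by
  have := (measurePreserving_eval' ν i)
  rw [← this.map_eq] at hf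
  exact hf.comp_aemeasurable (measurable_pi_apply i).aemeasurable

lemma integral_comp_eval {ι : Type*} [Fintype ι] (ν : ι → Measure ℝ)
    [∀ i, IsProbabilityMeasure (ν i)] (i : ι) {f : ℝ → ℝ}
    (hf : AEStronglyMeasurable f (ν i)) :
    ∫ x, f (x i) ∂(Measure.pi ν) = ∫ z, f z ∂(ν i) := by
  have h := (measurePreserving_eval' ν i)
  rw [← h.map_eq, integral_map (measurable_pi_apply i).aemeasurable (h.map_eq ▸ hf)]

lemma key_lemma {ι : Type*} [Fintype ι] (ν : ι → Measure ℝ)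
    [∀ i, IsProbabilityMeasure (ν i)] (g : ι → ℝ → ℝ)
    (hmeas : ∀ j, StronglyMeasurable (g j)) (hint : ∀ j, Integrable (g j) (ν j))
    (hmean : ∀ j, ∫ z, g j z ∂(ν j) = 0)
    (h : ∀ᵐ x ∂(Measure.pi ν), ∑ j, g j (x j) = 0) (l : ι) :
    ∀ᵐ z ∂(ν l), g l z = 0 := by
  classical
  set p : ι → Prop := fun j => j = l with hp
  set l₀ : Subtype p := ⟨l, rfl⟩ with hl₀def
  have hl₀ : (l₀ : ι) = l := rfl
  haveI huniq : Unique (Subtype p) :=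
    ⟨⟨l₀⟩, fun x => Subtype.ext ((show (x : ι) = l from x.2).trans hl₀.symm)⟩
  clear_value l₀
  clear hl₀def
  clear_value p
  clear hp
  set e := MeasurableEquiv.piEquivPiSubtypeProd (fun _ : ι => ℝ) p with he
  have hmp := measurePreserving_piEquivPiSubtypeProd (α := fun _ : ι => ℝ) ν p
  have h2 : ∀ᵐ y ∂((Measure.pi fun i : Subtype p => ν i).prod
      (Measure.pi fun i : {i // ¬ p i} => ν i)), ∑ j, g j (e.symm y j) = 0 := by
    have hms := hmp.symm e
    rw [← hms.map_eq] at h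
    exact ae_of_ae_map e.symm.measurable.aemeasurable h
  have hsum : ∀ (a : Subtype p → ℝ) (w : {i // ¬ p i} → ℝ),
      ∑ j, g j (e.symm (a, w) j)
        = g l₀ (a l₀) + ∑ j : {i // ¬ p i}, g j (w j) := by
    intro a w
    rw [← Fintype.sum_subtype_add_sum_subtype p (fun j => g j (e.symm (a, w) j))]
    congr 1
    · have h1 : ∀ x : Subtype p, g x (e.symm (a, w) x) = g l₀ (a l₀) := by
        intro x
        have hx : x = l₀ := Subsingleton.elim x l₀
        subst hx
        congr 1
        show (Equiv.piEquivPiSubtypeProd p (fun _ : ι => ℝ)).symm (a, w) x = a x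
        rw [Equiv.piEquivPiSubtypeProd_symm_apply, dif_pos x.2, Subtype.eta]
      rw [Finset.sum_congr rfl (fun x _ => h1 x), Finset.sum_const, Finset.card_univ,
        Fintype.card_unique, one_smul]
    · refine Finset.sum_congr rfl fun j _ => ?_
      congr 1
      show (Equiv.piEquivPiSubtypeProd p (fun _ : ι => ℝ)).symm (a, w) j = w j
      rw [Equiv.piEquivPiSubtypeProd_symm_apply, dif_neg j.2, Subtype.eta]
  have h3 := Measure.ae_ae_of_ae_prod h2
  have h4 : ∀ᵐ a ∂(Measure.pi fun i : Subtype p => ν i), g l₀ (a l₀) = 0 := by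
    filter_upwards [h3] with a ha
    have ha' : ∀ᵐ w ∂(Measure.pi fun i : {i // ¬ p i} => ν i),
        g l₀ (a l₀) + ∑ j : {i // ¬ p i}, g j (w j) = 0 := by
      filter_upwards [ha] with w hw
      rw [← hsum a w]; exact hw
    have hI : ∀ j : {i // ¬ p i}, Integrable (fun w : {i // ¬ p i} → ℝ => g j (w j))
        (Measure.pi fun i : {i // ¬ p i} => ν i) :=
      fun j => integrable_comp_eval _ j (hint j)
    have hzero : ∫ w, (g l₀ (a l₀) + ∑ j : {i // ¬ p i}, g j (w j))
        ∂(Measure.pi fun i : {i // ¬ p i} => ν i) = 0 := by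
      rw [integral_congr_ae ha']; simp
    rw [integral_add (integrable_const _) (integrable_finset_sum _ fun j _ => hI j),
      integral_const, integral_finset_sum _ fun j _ => hI j] at hzero
    simp only [measure_univ, ENNReal.toReal_one, probReal_univ, smul_eq_mul, one_mul] at hzero
    have hz : ∀ j : {i // ¬ p i},
        ∫ w, g j (w j) ∂(Measure.pi fun i : {i // ¬ p i} => ν i) = 0 := fun j => by
      rw [integral_comp_eval _ j (hint j).1]; exact hmean j
    simp only [hz, Finset.sum_const_zero, add_zero] at hzero
    exact hzero
  have hev := measurePreserving_eval' (fun i : Subtype p => ν i) l₀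
  have hset : MeasurableSet {z : ℝ | g l₀ z = 0} :=
    (hmeas l₀).measurable (measurableSet_singleton 0)
  have := (ae_map_iff (μ := Measure.pi fun i : Subtype p => ν i)
      (f := fun a : Subtype p → ℝ => a l₀) (p := fun z => g l₀ z = 0)
      (measurable_pi_apply l₀).aemeasurable hset).2 h4
  rwa [hev.map_eq, hl₀] at this

/-- Identifiability of the additive components: if
`μ + ∑ l, m_l(x_l) = μ' + ∑ l, m_l'(x_l)` for almost all `x` w.r.t. the product
measure `⨂ l, ν l` of the (independent) coordinate laws, and all components are
centered and integrable, then `μ = μ'` and `m_l = m_l'` `ν l`-a.e. for each `l`. -/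
theorem stmt1 {d : ℕ} (ν : Fin d → Measure ℝ) [∀ l, IsProbabilityMeasure (ν l)]
    (ml ml' : Fin d → ℝ → ℝ) (μ₀ μ₀' : ℝ)
    (hint : ∀ l, Integrable (ml l) (ν l)) (hint' : ∀ l, Integrable (ml' l) (ν l))
    (hmean : ∀ l, ∫ z, ml l z ∂(ν l) = 0) (hmean' : ∀ l, ∫ z, ml' l z ∂(ν l) = 0)
    (heq : ∀ᵐ x ∂(Measure.pi ν),
      μ₀ + ∑ l, ml l (x l) = μ₀' + ∑ l, ml' l (x l)) :
    μ₀ = μ₀' ∧ ∀ l, ml l =ᵐ[ν l] ml' l := by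
  have hcomp : ∀ (m : Fin d → ℝ → ℝ), (∀ l, Integrable (m l) (ν l)) →
      ∀ l : Fin d, ∫ x : Fin d → ℝ, m l (x l) ∂(Measure.pi ν) = ∫ z, m l z ∂(ν l) :=
    fun m hm l => integral_comp_eval ν l (hm l).1
  have hIμ : ∀ (m : Fin d → ℝ → ℝ) (c : ℝ), (∀ l, Integrable (m l) (ν l)) →
      (∀ l, ∫ z, m l z ∂(ν l) = 0) →
      ∫ x : Fin d → ℝ, (c + ∑ l, m l (x l)) ∂(Measure.pi ν) = c := by
    intro m c hm hmz
    rw [integral_add (integrable_const _)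
        (integrable_finset_sum _ fun l _ => integrable_comp_eval ν l (hm l)),
      integral_const, integral_finset_sum _ fun l _ => integrable_comp_eval ν l (hm l)]
    have : ∀ l : Fin d, ∫ x : Fin d → ℝ, m l (x l) ∂(Measure.pi ν) = 0 := fun l => by
      rw [hcomp m hm l]; exact hmz l
    simp [this]
  have hμ : μ₀ = μ₀' := by
    have h1 := integral_congr_ae heq
    rwa [hIμ ml μ₀ hint hmean, hIμ ml' μ₀' hint' hmean'] at h1
  refine ⟨hμ, fun l => ?_⟩
  -- measurable representatives
  set g : Fin d → ℝ → ℝ :=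
    fun j z => (hint j).1.mk (ml j) z - (hint' j).1.mk (ml' j) z with hg
  have hgae : ∀ j, g j =ᵐ[ν j] fun z => ml j z - ml' j z := fun j =>
    ((hint j).1.ae_eq_mk.symm).sub ((hint' j).1.ae_eq_mk.symm)
  have hmeasg : ∀ j, StronglyMeasurable (g j) := fun j =>
    ((hint j).1.stronglyMeasurable_mk).sub ((hint' j).1.stronglyMeasurable_mk)
  have hintg : ∀ j, Integrable (g j) (ν j) := fun j =>
    (((hint j).congr (hint j).1.ae_eq_mk).sub ((hint' j).congr (hint' j).1.ae_eq_mk))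
  have hmeang : ∀ j, ∫ z, g j z ∂(ν j) = 0 := fun j => by
    rw [integral_congr_ae (hgae j), integral_sub (hint j) (hint' j), hmean j, hmean' j,
      sub_zero]
  have hc : ∀ j : Fin d, ∀ᵐ x ∂(Measure.pi ν), g j (x j) = ml j (x j) - ml' j (x j) := by
    intro j
    have h1 : ∀ᵐ z ∂(ν j), g j z = ml j z - ml' j z := hgae j
    rw [← (measurePreserving_eval' ν j).map_eq] at h1
    exact ae_of_ae_map (measurable_pi_apply j).aemeasurable h1
  have hae : ∀ᵐ x ∂(Measure.pi ν), ∑ j, g j (x j) = 0 := by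
    filter_upwards [heq, ae_all_iff.2 hc] with x hx h2
    rw [Finset.sum_congr rfl fun j _ => h2 j, Finset.sum_sub_distrib]
    rw [hμ] at hx
    linarith
  have hkey := key_lemma ν g hmeasg hintg hmeang hae l
  filter_upwards [hkey, hgae l] with z h1 h2
  have : ml l z - ml' l z = 0 := by rw [← h2]; exact h1
  linarith
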